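/- Let D be a division ring and R : ℤ → Dˣ a sequence of units such that for every n ∈ ℤ the element R_{n+1} R_n⁻¹ R_{n-1} commutes with R_n. Then the quantity C_n := R_{n+1}⁻¹ R_n R_{n+1} R_n⁻¹ is independent of n, i.e. C_n = C_m for all n, m ∈ ℤ. In particular, the commutator C is a conserved quantity of every discrete evolution of the form R_{n+1} R_n⁻¹ R_{n-1} = f_n(R_n) with f_n(R_n) commuting with R_n. -/

import Mathlib

private theorem comm_step {G : Type*} [Group G] (a b x : G) (hx : Commute x b) :
    (x * a⁻¹ * b)⁻¹ * b * (x * a⁻¹ * b) * b⁻¹ = b⁻¹ * a * b * a⁻¹ := by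
  have h1 : x⁻¹ * b = b * x⁻¹ := hx.inv_left.eq
  calc (x * a⁻¹ * b)⁻¹ * b * (x * a⁻¹ * b) * b⁻¹
      = b⁻¹ * a * (x⁻¹ * b) * x * a⁻¹ := by group
    _ = b⁻¹ * a * (b * x⁻¹) * x * a⁻¹ := by rw [h1]
    _ = b⁻¹ * a * b * a⁻¹ := by group

/-- If for every `n` the element `R_{n+1} R_n⁻¹ R_{n-1}` commutes with `R_n`, then the
commutator `C_n = R_{n+1}⁻¹ R_n R_{n+1} R_n⁻¹` is a conserved quantity (independent of `n`). -/
theorem commutator_conserved {D : Type*} [DivisionRing D] (R : ℤ → Dˣ)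
    (h : ∀ n : ℤ,
      Commute ((R (n + 1) : D) * ((R n)⁻¹ : Dˣ) * (R (n - 1) : D)) ((R n : D))) :
    ∀ n m : ℤ,
      (((R (n + 1))⁻¹ : Dˣ) : D) * (R n : D) * (R (n + 1) : D) * (((R n)⁻¹ : Dˣ) : D) =
      (((R (m + 1))⁻¹ : Dˣ) : D) * (R m : D) * (R (m + 1) : D) * (((R m)⁻¹ : Dˣ) : D) := by
  -- work in the group of units
  set g : ℤ → Dˣ := fun n => (R (n + 1))⁻¹ * R n * (R (n + 1)) * (R n)⁻¹ with hg
  have hcomm : ∀ n : ℤ, Commute (R (n + 1) * (R n)⁻¹ * R (n - 1)) (R n) := by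
    intro n
    exact Units.ext (by simpa using (h n).eq)
  have hstep : ∀ n : ℤ, g n = g (n - 1) := by
    intro n
    have hx := hcomm n
    have hc : R (n + 1) = (R (n + 1) * (R n)⁻¹ * R (n - 1)) * (R (n - 1))⁻¹ * R n := by
      group
    have := comm_step (G := Dˣ) (R (n - 1)) (R n) (R (n + 1) * (R n)⁻¹ * R (n - 1)) hx
    simp only [hg]
    rw [hc] at *
    simpa [sub_add_cancel] using this
  have hzero : ∀ n : ℤ, g n = g 0 := by
    intro n
    induction n using Int.induction_on with
    | zero => rfl
    | succ k ih => rw [← ih]; simpa using hstep ((k : ℤ) + 1)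
    | pred k ih => rw [← ih]; have := hstep (-(k : ℤ)); rw [this]
  intro n m
  have : g n = g m := (hzero n).trans (hzero m).symm
  have := congrArg (Units.val) this
  simpa [hg, mul_assoc] using this
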